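/- Every uncountable G_δ subset S of [0,1] with Lebesgue measure zero contains a compact set C homeomorphic to the Cantor set, and there exists a nonatomic finite Borel measure ν on ℝ with ν(C) > 0 whose (topological) support is exactly C. -/

import Mathlib

open Set MeasureTheory

open Topology

theorem stmt2 (S : Set ℝ) (hS : S ⊆ Set.Icc 0 1) (hGδ : IsGδ S)
    (hunc : ¬ S.Countable) (hnull : volume S = 0) :
    ∃ C : Set ℝ, C ⊆ S ∧ IsCompact C ∧ Nonempty (C ≃ₜ (ℕ → Bool)) ∧
      ∃ ν : Measure ℝ, IsFiniteMeasure ν ∧ (∀ x : ℝ, ν {x} = 0) ∧ 0 < ν C ∧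
        ν Cᶜ = 0 ∧ (∀ x ∈ C, ∀ U : Set ℝ, IsOpen U → x ∈ U → 0 < ν U) := by
  -- Step 1: find a continuous injection of Cantor space into S.
  obtain ⟨t', ht'le, ht'polish, hSclosed, -⟩ := (hGδ.measurableSet).isClopenable
  obtain ⟨f, hfS, hfc, hfinj⟩ :=
    @IsClosed.exists_nat_bool_injection_of_not_countable ℝ t' ht'polish S hSclosed hunc
  have hfcont : Continuous[Pi.topologicalSpace, UniformSpace.toTopologicalSpace] f :=
    continuous_iff_coinduced_le.mpr
      (le_trans ((continuous_iff_coinduced_le (t₂ := t')).mp hfc) ht'le)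
  clear hfc hSclosed ht'polish ht'le t'
  set C : Set ℝ := Set.range f with hC
  have hCS : C ⊆ S := hfS
  have hCcomp : IsCompact C := isCompact_range hfcont
  have hCmeas : MeasurableSet C := hCcomp.isClosed.measurableSet
  have hemb := hfcont.isClosedEmbedding hfinj
  refine ⟨C, hCS, hCcomp, ⟨hemb.toIsEmbedding.toHomeomorph.symm⟩, ?_⟩
  -- Step 2: build a measure via Haar measure on `ℕ → ZMod 2`.
  letI : TopologicalSpace (ZMod 2) := ⊥
  haveI : DiscreteTopology (ZMod 2) := ⟨rfl⟩
  letI : MeasurableSpace (ℕ → ZMod 2) := borel _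
  haveI : BorelSpace (ℕ → ZMod 2) := ⟨rfl⟩
  let μ : Measure (ℕ → ZMod 2) := Measure.addHaar
  -- an injection of ℕ into the group
  have huinj : Function.Injective (fun n => (Pi.single n 1 : ℕ → ZMod 2)) := by
    intro n m h
    by_contra hnm
    have := congrFun h n
    simp only [Pi.single_eq_same, Pi.single_eq_of_ne hnm] at this
    exact one_ne_zero this
  -- singletons have Haar measure zero
  have hsing : ∀ x : ℕ → ZMod 2, μ {x} = 0 := by
    have hx0 : ∀ x : ℕ → ZMod 2, μ {x} = μ {(0 : ℕ → ZMod 2)} := by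
      intro x
      have h1 := measure_preimage_add μ x {x}
      have hpre : (fun h => x + h) ⁻¹' {x} = {(0 : ℕ → ZMod 2)} := by
        ext y
        simp [add_eq_left]
      rw [hpre] at h1
      exact h1.symm
    by_contra h
    push_neg at h
    obtain ⟨x, hx⟩ := h
    have hc : μ {(0 : ℕ → ZMod 2)} ≠ 0 := fun h0 => hx ((hx0 x).trans h0)
    have hdisj : Pairwise (Function.onFun Disjoint
        (fun n : ℕ => ({(Pi.single n 1 : ℕ → ZMod 2)} : Set (ℕ → ZMod 2)))) := by
      intro n m hnm
      simp only [Function.onFun, Set.disjoint_singleton]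
      exact fun h => hnm (huinj h)
    have hU : μ (⋃ n : ℕ, {(Pi.single n 1 : ℕ → ZMod 2)}) =
        ∑' n : ℕ, μ {(Pi.single n 1 : ℕ → ZMod 2)} :=
      measure_iUnion hdisj fun n => measurableSet_singleton _
    have htop : (∑' _ : ℕ, μ {(0 : ℕ → ZMod 2)}) = ⊤ :=
      ENNReal.tsum_const_eq_top_of_ne_zero hc
    rw [tsum_congr (fun n => hx0 _), htop] at hU
    exact (measure_ne_top μ _) (top_le_iff.mp (hU ▸ measure_mono (Set.subset_univ _) :
      (⊤ : ENNReal) ≤ μ Set.univ))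
  -- the map from the group to ℝ
  let e : (ℕ → Bool) ≃ₜ (ℕ → ZMod 2) :=
    Homeomorph.piCongrRight fun _ =>
      { toEquiv := finTwoEquiv.symm
        continuous_toFun := continuous_of_discreteTopology
        continuous_invFun := continuous_of_discreteTopology }
  let g : (ℕ → ZMod 2) → ℝ := f ∘ e.symm
  have hgc : Continuous g := hfcont.comp e.symm.continuous
  have hgm : Measurable g := hgc.measurable
  have hginj : Function.Injective g := hfinj.comp e.symm.injective
  have hgrange : Set.range g = C := e.symm.surjective.range_comp f
  refine ⟨μ.map g, μ.isFiniteMeasure_map g, ?_, ?_, ?_, ?_⟩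
  · intro x
    rw [Measure.map_apply hgm (measurableSet_singleton x)]
    have hsub : (g ⁻¹' {x}).Subsingleton := fun a ha b hb => hginj (ha.trans hb.symm)
    rcases hsub.eq_empty_or_singleton with h | ⟨y, h⟩
    · rw [h]; exact measure_empty
    · rw [h]; exact hsing y
  · rw [Measure.map_apply hgm hCmeas]
    have : g ⁻¹' C = Set.univ := Set.preimage_eq_univ_iff.2 hgrange.le
    rw [this]
    exact isOpen_univ.measure_pos μ Set.univ_nonempty
  · rw [Measure.map_apply hgm hCmeas.compl]
    have : g ⁻¹' Cᶜ = ∅ := by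
      rw [Set.eq_empty_iff_forall_notMem]
      intro y hy
      exact hy (hgrange ▸ Set.mem_range_self y)
    rw [this]
    exact measure_empty
  · intro x hx U hU hxU
    rw [Measure.map_apply hgm hU.measurableSet]
    have hx' : x ∈ Set.range g := hgrange.symm ▸ hx
    obtain ⟨y, hy⟩ := hx'
    exact (hU.preimage hgc).measure_pos μ ⟨y, by simp [Set.mem_preimage, hy, hxU]⟩
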